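/- Let d ≥ r ≥ 1 be integers, let p_1, …, p_r be positive integers, and let v^{(i,j)} ∈ ℝ^d for i ∈ [r], j ∈ [p_i] be arbitrary vectors. Then the volume function f_V : ∏_{i=1}^r Δ_{p_i} → ℝ defined by f_V(x) = det(W(x)ᵀ W(x))^{1/2}, where W(x) ∈ ℝ^{d×r} is the matrix whose i-th column is Σ_{j=1}^{p_i} x^i_j v^{(i,j)}, is 2-anti-concentrated: for every coordinate i ∈ [r], every fixed choice of y^j ∈ Δ_{p_j} for j ≠ i, and every c ∈ (0,1), the uniform measure μ_{p_i} of the set { z ∈ Δ_{p_i} : f_V(y^1, …, y^{i−1}, z, y^{i+1}, …, y^r) ≥ c · sup_{w ∈ Δ_{p_i}} f_V(y^1, …, w, …, y^r) } is at least 1 − 2 p_i c. -/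

import Mathlib

open MeasureTheory Matrix
open scoped ENNReal NNReal

set_option maxHeartbeats 1000000

noncomputable section

/-- The standard simplex `Δ_d = {x ∈ ℝ^d : ∑ x_i = 1, x ≥ 0}` inside Euclidean space. -/
def stdSimplexE (d : ℕ) : Set (EuclideanSpace ℝ (Fin d)) :=
  {x | (∀ i, 0 ≤ x i) ∧ ∑ i, x i = 1}

/-- The uniform probability measure `μ_d` on the standard simplex: the `(d-1)`-dimensional
Hausdorff measure restricted to the simplex and normalized to total mass one. -/
def simplexUniform (d : ℕ) : Measure (EuclideanSpace ℝ (Fin d)) :=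
  (μH[(d : ℝ) - 1] (stdSimplexE d))⁻¹ • (μH[(d : ℝ) - 1]).restrict (stdSimplexE d)

/-- The volume function `f_V(x) = det(W(x)ᵀ W(x))^{1/2}`, where the `i`-th column of
`W(x) ∈ ℝ^{d×r}` is `∑_j x^i_j v^{(i,j)}`. -/
def volFn {d r : ℕ} (p : Fin r → ℕ) (v : ∀ i : Fin r, Fin (p i) → (Fin d → ℝ))
    (x : ∀ i : Fin r, EuclideanSpace ℝ (Fin (p i))) : ℝ :=
  Real.sqrt (Matrix.det
    ((Matrix.of fun (a : Fin d) (i : Fin r) => ∑ j, x i j * v i j a)ᵀ *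
      Matrix.of fun (a : Fin d) (i : Fin r) => ∑ j, x i j * v i j a))

namespace VolAux
variable {d r : ℕ}

def Wcol (i : Fin r) (w : Fin r → Fin d → ℝ) (u : Fin d → ℝ) : Matrix (Fin d) (Fin r) ℝ :=
  Matrix.of fun a k => if k = i then u a else w k a

def Bform (i : Fin r) (w : Fin r → Fin d → ℝ) (u u' : Fin d → ℝ) : ℝ :=
  ((Wcol i w u)ᵀ * Wcol i w u').det

lemma Bform_symm (i : Fin r) (w : Fin r → Fin d → ℝ) (u u' : Fin d → ℝ) :
    Bform i w u u' = Bform i w u' u := by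
  rw [Bform, ← Matrix.det_transpose, Matrix.transpose_mul, Matrix.transpose_transpose]; rfl

lemma Bform_nonneg (i : Fin r) (w : Fin r → Fin d → ℝ) (u : Fin d → ℝ) :
    0 ≤ Bform i w u u := by
  have h : ((Wcol i w u)ᴴ * Wcol i w u).PosSemidef :=
    Matrix.posSemidef_conjTranspose_mul_self _
  have hconj : (Wcol i w u)ᴴ = (Wcol i w u)ᵀ := by
    ext a b; simp [Matrix.conjTranspose_apply, Matrix.transpose_apply]
  rw [Bform, ← hconj]
  rw [h.isHermitian.det_eq_prod_eigenvalues]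
  exact Finset.prod_nonneg fun j _ => h.eigenvalues_nonneg j

end VolAux

namespace VolAux2
open VolAux
variable {d r : ℕ}

def Rrow (i : Fin r) (w : Fin r → Fin d → ℝ) (u u' : Fin d → ℝ) : Fin r → ℝ :=
  fun l => ∑ a, u a * (Wcol i w u') a l

lemma key (i : Fin r) (w : Fin r → Fin d → ℝ) (u u' u₀ : Fin d → ℝ) :
    (Wcol i w u)ᵀ * Wcol i w u' =
      Matrix.updateRow ((Wcol i w u₀)ᵀ * Wcol i w u') i (Rrow i w u u') := by
  ext k l
  rw [Matrix.updateRow_apply]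
  by_cases hk : k = i
  · subst hk
    simp only [if_pos rfl, Rrow, Matrix.mul_apply, Matrix.transpose_apply]
    congr 1; ext a; rw [Wcol]; simp
  · simp only [if_neg hk, Matrix.mul_apply, Matrix.transpose_apply]
    congr 1; ext a
    simp [Wcol, hk]

lemma Bform_add_left (i : Fin r) (w : Fin r → Fin d → ℝ) (u₁ u₂ u' : Fin d → ℝ) :
    Bform i w (u₁ + u₂) u' = Bform i w u₁ u' + Bform i w u₂ u' := by
  have h12 : Rrow i w (u₁ + u₂) u' = Rrow i w u₁ u' + Rrow i w u₂ u' := by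
    funext l; simp [Rrow, add_mul, Finset.sum_add_distrib]
  have hidem : ∀ (A : Matrix (Fin r) (Fin r) ℝ) (f g : Fin r → ℝ),
      (A.updateRow i f).updateRow i g = A.updateRow i g := by
    intro A f g; ext k l; by_cases hk : k = i <;> simp [Matrix.updateRow_apply, hk]
  rw [Bform, key i w (u₁ + u₂) u' u₁, h12, Matrix.det_updateRow_add]
  rw [Bform, key i w u₁ u' u₁, Bform, key i w u₂ u' u₁, hidem, hidem]

lemma Bform_smul_left (i : Fin r) (w : Fin r → Fin d → ℝ) (s : ℝ) (u u' : Fin d → ℝ) :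
    Bform i w (s • u) u' = s * Bform i w u u' := by
  have h : Rrow i w (s • u) u' = s • Rrow i w u u' := by
    funext l; simp [Rrow, Finset.mul_sum, mul_assoc]
  have hidem : ∀ (A : Matrix (Fin r) (Fin r) ℝ) (f g : Fin r → ℝ),
      (A.updateRow i f).updateRow i g = A.updateRow i g := by
    intro A f g; ext k l; by_cases hk : k = i <;> simp [Matrix.updateRow_apply, hk]
  rw [Bform, key i w (s • u) u' u, h, Matrix.det_updateRow_smul]
  rw [Bform, key i w u u' u, hidem]

end VolAux2

namespace VolAux3
open VolAux VolAux2
variable {d r : ℕ}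

lemma Bform_add_right (i : Fin r) (w : Fin r → Fin d → ℝ) (u u₁ u₂ : Fin d → ℝ) :
    Bform i w u (u₁ + u₂) = Bform i w u u₁ + Bform i w u u₂ := by
  rw [Bform_symm, Bform_add_left, Bform_symm i w u₁, Bform_symm i w u₂]

lemma Bform_smul_right (i : Fin r) (w : Fin r → Fin d → ℝ) (s : ℝ) (u u' : Fin d → ℝ) :
    Bform i w u (s • u') = s * Bform i w u u' := by
  rw [Bform_symm, Bform_smul_left, Bform_symm i w u']

lemma Bform_cs (i : Fin r) (w : Fin r → Fin d → ℝ) (u u' : Fin d → ℝ) :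
    Bform i w u u' ^ 2 ≤ Bform i w u u * Bform i w u' u' := by
  have key : ∀ x : ℝ,
      0 ≤ Bform i w u' u' * (x * x) + (2 * Bform i w u u') * x + Bform i w u u := by
    intro x
    have h0 := Bform_nonneg i w (u + x • u')
    have hexp : Bform i w (u + x • u') (u + x • u')
        = Bform i w u' u' * (x * x) + (2 * Bform i w u u') * x + Bform i w u u := by
      rw [Bform_add_left, Bform_add_right, Bform_add_right, Bform_smul_left,
        Bform_smul_right, Bform_smul_left, Bform_smul_right, Bform_symm i w u' u]
      ring
    linarith [hexp ▸ h0]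
  have hd := discrim_le_zero key
  rw [discrim] at hd
  nlinarith [hd]

def qfun (i : Fin r) (w : Fin r → Fin d → ℝ) (u : Fin d → ℝ) : ℝ :=
  Real.sqrt (Bform i w u u)

lemma qfun_sq (i : Fin r) (w : Fin r → Fin d → ℝ) (u : Fin d → ℝ) :
    qfun i w u ^ 2 = Bform i w u u :=
  Real.sq_sqrt (Bform_nonneg i w u)

lemma qfun_nonneg (i : Fin r) (w : Fin r → Fin d → ℝ) (u : Fin d → ℝ) : 0 ≤ qfun i w u :=
  Real.sqrt_nonneg _

lemma qfun_add (i : Fin r) (w : Fin r → Fin d → ℝ) (u u' : Fin d → ℝ) :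
    qfun i w (u + u') ≤ qfun i w u + qfun i w u' := by
  have hBuu' : Bform i w u u' ≤ qfun i w u * qfun i w u' := by
    calc Bform i w u u' ≤ |Bform i w u u'| := le_abs_self _
      _ = Real.sqrt (Bform i w u u' ^ 2) := (Real.sqrt_sq_eq_abs _).symm
      _ ≤ Real.sqrt (Bform i w u u * Bform i w u' u') := Real.sqrt_le_sqrt (Bform_cs i w u u')
      _ = qfun i w u * qfun i w u' := Real.sqrt_mul (Bform_nonneg i w u) _
  have h1 : Bform i w (u + u') (u + u') ≤ (qfun i w u + qfun i w u') ^ 2 := by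
    rw [Bform_add_left, Bform_add_right, Bform_add_right, Bform_symm i w u' u]
    nlinarith [qfun_sq i w u, qfun_sq i w u']
  calc qfun i w (u + u') = Real.sqrt (Bform i w (u + u') (u + u')) := rfl
    _ ≤ Real.sqrt ((qfun i w u + qfun i w u') ^ 2) := Real.sqrt_le_sqrt h1
    _ = qfun i w u + qfun i w u' := by
        rw [Real.sqrt_sq (add_nonneg (qfun_nonneg i w u) (qfun_nonneg i w u'))]

lemma qfun_smul (i : Fin r) (w : Fin r → Fin d → ℝ) (s : ℝ) (u : Fin d → ℝ) :
    qfun i w (s • u) = ‖s‖ * qfun i w u := by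
  rw [qfun, Bform_smul_left, Bform_smul_right, ← mul_assoc, qfun]
  rw [show s * s = s ^ 2 by ring, Real.sqrt_mul (sq_nonneg s), Real.sqrt_sq_eq_abs]
  rfl

def qSemi (i : Fin r) (w : Fin r → Fin d → ℝ) : Seminorm ℝ (Fin d → ℝ) :=
  Seminorm.of (qfun i w) (qfun_add i w) (qfun_smul i w)

end VolAux3
namespace VolAux4


lemma simplex_isClosed (P : ℕ) : IsClosed (stdSimplexE P) := by
  have hcont : ∀ l : Fin P, Continuous (fun z : EuclideanSpace ℝ (Fin P) => z l) :=
    fun l => (EuclideanSpace.proj (𝕜 := ℝ) l).continuous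
  have : stdSimplexE P =
      (⋂ l : Fin P, {z : EuclideanSpace ℝ (Fin P) | 0 ≤ z l}) ∩
        {z : EuclideanSpace ℝ (Fin P) | ∑ l, z l = 1} := by
    ext z; simp [stdSimplexE, Set.mem_iInter]
  rw [this]
  exact (isClosed_iInter fun l => isClosed_le continuous_const (hcont l)).inter
    (isClosed_eq (by exact continuous_finset_sum _ fun l _ => hcont l) continuous_const)

def Fmap (m : ℕ) : (Fin m → ℝ) → EuclideanSpace ℝ (Fin (m + 1)) := fun x =>
  WithLp.toLp 2 (fun l => if h : (l : ℕ) < m then x ⟨l, h⟩ else 1 - ∑ j, x j)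

def Gmap (m : ℕ) : EuclideanSpace ℝ (Fin (m + 1)) → (Fin m → ℝ) := fun z j =>
  z (Fin.castSucc j)

def simplexF (m : ℕ) : Set (Fin m → ℝ) := {x | (∀ j, 0 ≤ x j) ∧ ∑ j, x j ≤ 1}

lemma Gmap_Fmap (m : ℕ) (x : Fin m → ℝ) : Gmap m (Fmap m x) = x := by
  funext j
  simp only [Gmap, Fmap, PiLp.toLp_apply]
  rw [dif_pos (by simp [j.isLt])]
  exact congrArg x (Fin.ext (by simp))

lemma Fmap_castSucc (m : ℕ) (x : Fin m → ℝ) (j : Fin m) :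
    Fmap m x (Fin.castSucc j) = x j := by
  simp only [Fmap, PiLp.toLp_apply]
  rw [dif_pos (by simp [j.isLt])]
  exact congrArg x (Fin.ext (by simp))

lemma Fmap_last (m : ℕ) (x : Fin m → ℝ) :
    Fmap m x (Fin.last m) = 1 - ∑ j, x j := by
  simp only [Fmap, PiLp.toLp_apply]
  rw [dif_neg (by simp)]

lemma Fmap_image (m : ℕ) : Fmap m '' simplexF m = stdSimplexE (m + 1) := by
  ext z
  constructor
  · rintro ⟨x, ⟨hx0, hx1⟩, rfl⟩
    constructor
    · intro l
      by_cases h : (l : ℕ) < m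
      · simpa [Fmap, dif_pos h] using hx0 ⟨l, h⟩
      · simp only [Fmap, PiLp.toLp_apply, dif_neg h]; linarith
    · rw [Fin.sum_univ_castSucc]
      have : ∀ j : Fin m, Fmap m x (Fin.castSucc j) = x j := Fmap_castSucc m x
      rw [Finset.sum_congr rfl fun j _ => this j, Fmap_last]
      ring
  · rintro ⟨hz0, hz1⟩
    refine ⟨Gmap m z, ⟨fun j => hz0 _, ?_⟩, ?_⟩
    · have := Fin.sum_univ_castSucc (f := fun l => z l) (n := m)
      have h0 : 0 ≤ z (Fin.last m) := hz0 _
      simp only [Gmap]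
      rw [show ∑ j : Fin m, z (Fin.castSucc j) = ∑ l, z l - z (Fin.last m) by
        rw [this]; ring]
      linarith [hz1.le, hz1.ge]
    · ext l
      by_cases h : (l : ℕ) < m
      · have : l = Fin.castSucc ⟨l, h⟩ := by ext; simp
        rw [this, Fmap_castSucc]
        simp [Gmap]
      · have hl : l = Fin.last m := by
          ext; simp only [Fin.val_last]; omega
        subst hl
        rw [Fmap_last]
        have := Fin.sum_univ_castSucc (f := fun l => z l) (n := m)
        simp only [Gmap]
        rw [show ∑ j : Fin m, z (Fin.castSucc j) = ∑ l, z l - z (Fin.last m) by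
          rw [this]; ring, hz1]
        ring

end VolAux4

namespace VolAux5
open VolAux4

lemma coord_dist_le (P : ℕ) (z z' : EuclideanSpace ℝ (Fin P)) (l : Fin P) :
    dist (z l) (z' l) ≤ dist z z' := by
  rw [EuclideanSpace.dist_eq]
  have h1 : dist (z l) (z' l) = Real.sqrt (dist (z l) (z' l) ^ 2) := by
    rw [Real.sqrt_sq dist_nonneg]
  rw [h1]
  apply Real.sqrt_le_sqrt
  exact Finset.single_le_sum (f := fun l => dist (z l) (z' l) ^ 2)
    (fun j _ => sq_nonneg _) (Finset.mem_univ l)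

lemma Gmap_lip (m : ℕ) : LipschitzWith 1 (Gmap m) := by
  apply LipschitzWith.of_dist_le_mul
  intro z z'
  rw [NNReal.coe_one, one_mul]
  by_cases hm : m = 0
  · subst hm
    have hzz : Gmap 0 z = Gmap 0 z' := by
      funext j; exact absurd j.isLt (by omega)
    rw [hzz, dist_self]
    exact dist_nonneg
  · have : Nonempty (Fin m) := ⟨⟨0, Nat.pos_of_ne_zero hm⟩⟩
    rw [dist_pi_le_iff dist_nonneg]
    intro j
    exact coord_dist_le _ z z' _

lemma Fmap_lip (m : ℕ) : LipschitzWith ((m+1)*(m+1) : ℕ) (Fmap m) := by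
  apply LipschitzWith.of_dist_le_mul
  intro x x'
  have hcoord : ∀ l : Fin (m+1), dist (Fmap m x l) (Fmap m x' l) ≤ (m+1) * dist x x' := by
    intro l
    by_cases h : (l : ℕ) < m
    · simp only [Fmap, PiLp.toLp_apply, dif_pos h]
      calc dist (x ⟨l, h⟩) (x' ⟨l, h⟩) ≤ dist x x' := dist_le_pi_dist x x' _
        _ ≤ (m+1) * dist x x' := by nlinarith [dist_nonneg (x := x) (y := x'), Nat.cast_nonneg (α := ℝ) m]
    · simp only [Fmap, PiLp.toLp_apply, dif_neg h, Real.dist_eq]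
      have : (1 - ∑ j, x j) - (1 - ∑ j, x' j) = ∑ j, (x' j - x j) := by
        rw [Finset.sum_sub_distrib]; ring
      rw [this]
      calc |∑ j, (x' j - x j)| ≤ ∑ j, |x' j - x j| := Finset.abs_sum_le_sum_abs _ _
        _ ≤ ∑ _j : Fin m, dist x x' := by
            apply Finset.sum_le_sum
            intro j _
            rw [show |x' j - x j| = dist (x j) (x' j) by rw [dist_comm, Real.dist_eq]]
            exact dist_le_pi_dist x x' j
        _ = m * dist x x' := by rw [Finset.sum_const]; simp [mul_comm]
        _ ≤ (m+1) * dist x x' := by nlinarith [dist_nonneg (x := x) (y := x')]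
  rw [dist_eq_norm, EuclideanSpace.norm_eq]
  push_cast
  calc Real.sqrt (∑ l, ‖(Fmap m x - Fmap m x') l‖ ^ 2)
      ≤ Real.sqrt (∑ _l : Fin (m+1), ((m+1) * dist x x') ^ 2) := by
        apply Real.sqrt_le_sqrt
        apply Finset.sum_le_sum
        intro l _
        have : ‖(Fmap m x - Fmap m x') l‖ = dist (Fmap m x l) (Fmap m x' l) := by
          rw [dist_eq_norm]; rfl
        rw [this]
        have h := hcoord l
        have h0 : (0:ℝ) ≤ dist (Fmap m x l) (Fmap m x' l) := dist_nonneg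
        nlinarith
    _ = Real.sqrt ((m+1)) * ((m+1) * dist x x') := by
        rw [Finset.sum_const]
        simp only [Finset.card_univ, Fintype.card_fin, nsmul_eq_mul]
        rw [Real.sqrt_mul (by positivity), Real.sqrt_sq (by positivity)]
        push_cast; ring_nf
    _ ≤ (m+1) * ((m+1) * dist x x') := by
        have h1 : Real.sqrt ((m:ℝ)+1) ≤ (m:ℝ)+1 := by
          have h2 := Real.sqrt_le_sqrt (show ((m:ℝ)+1) ≤ ((m:ℝ)+1)^2 by
            nlinarith [Nat.cast_nonneg (α := ℝ) m])
          rwa [Real.sqrt_sq (by positivity)] at h2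
        have h2 : (0:ℝ) ≤ (m+1) * dist x x' := by positivity
        nlinarith
    _ = (m+1) * (m+1) * dist x x' := by ring

end VolAux5

namespace VolAux6
open VolAux4 VolAux5

lemma simplexF_vol_fin (m : ℕ) : volume (simplexF m) ≤ 1 := by
  have hsub : simplexF m ⊆ Set.pi Set.univ (fun _ : Fin m => Set.Icc (0:ℝ) 1) := by
    rintro x ⟨hx0, hx1⟩ j _
    refine ⟨hx0 j, ?_⟩
    calc x j ≤ ∑ l, x l := Finset.single_le_sum (fun l _ => hx0 l) (Finset.mem_univ j)
      _ ≤ 1 := hx1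
  calc volume (simplexF m) ≤ volume (Set.pi Set.univ (fun _ : Fin m => Set.Icc (0:ℝ) 1)) :=
        measure_mono hsub
    _ = ∏ _j : Fin m, volume (Set.Icc (0:ℝ) 1) := by rw [volume_pi_pi]
    _ = 1 := by simp [Real.volume_Icc]

lemma simplexF_vol_pos (m : ℕ) : 0 < volume (simplexF m) := by
  rcases Nat.eq_zero_or_pos m with hm | hm
  · subst hm
    have : simplexF 0 = Set.univ := by
      ext x; simp [simplexF]
    rw [this]
    have huniv : (Set.univ : Set (Fin 0 → ℝ)) = Set.pi Set.univ (fun _ => Set.univ) := by simp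
    rw [huniv, volume_pi_pi]
    simp
  · have hsub : Set.pi Set.univ (fun _ : Fin m => Set.Ioo (0:ℝ) (1/m)) ⊆ simplexF m := by
      rintro x hx
      refine ⟨fun j => (hx j (Set.mem_univ j)).1.le, ?_⟩
      calc ∑ j, x j ≤ ∑ _j : Fin m, (1/m : ℝ) :=
            Finset.sum_le_sum fun j _ => (hx j (Set.mem_univ j)).2.le
        _ = m * (1/m) := by rw [Finset.sum_const]; simp [mul_comm]
        _ ≤ 1 := by
            rw [mul_one_div, div_self (by positivity : (m:ℝ) ≠ 0)]
    calc (0:ℝ≥0∞) < ∏ _j : Fin m, volume (Set.Ioo (0:ℝ) (1/m)) := by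
          rw [Finset.prod_const]
          apply ENNReal.pow_pos
          rw [Real.volume_Ioo]
          simp only [sub_zero]
          apply ENNReal.ofReal_pos.2
          positivity
      _ = volume (Set.pi Set.univ (fun _ : Fin m => Set.Ioo (0:ℝ) (1/m))) := by
          rw [volume_pi_pi]
      _ ≤ volume (simplexF m) := measure_mono hsub

lemma hausdorff_simplexF (m : ℕ) :
    (μH[(m:ℝ)] : Measure (Fin m → ℝ)) (simplexF m) = volume (simplexF m) := by
  have h := MeasureTheory.hausdorffMeasure_pi_real (ι := Fin m)
  have hcard : ((Fintype.card (Fin m) : ℕ) : ℝ) = (m : ℝ) := by simp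
  rw [← hcard, h]

lemma simplexE_meas_fin (m : ℕ) : μH[(m:ℝ)] (stdSimplexE (m+1)) < ⊤ := by
  rw [← Fmap_image m]
  calc μH[(m:ℝ)] (Fmap m '' simplexF m)
      ≤ (((m+1)*(m+1) : ℕ) : ℝ≥0∞) ^ (m:ℝ) * μH[(m:ℝ)] (simplexF m) := by
        have := (Fmap_lip m).hausdorffMeasure_image_le (d := (m:ℝ))
          (by positivity) (simplexF m)
        simpa using this
    _ < ⊤ := by
        apply ENNReal.mul_lt_top
        · refine ENNReal.rpow_lt_top_of_nonneg (by positivity) ?_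
          rw [← ENNReal.coe_natCast]
          exact ENNReal.coe_ne_top
        · rw [hausdorff_simplexF]
          exact lt_of_le_of_lt (simplexF_vol_fin m) (by norm_num)

lemma simplexE_meas_pos (m : ℕ) : 0 < μH[(m:ℝ)] (stdSimplexE (m+1)) := by
  have hsub : simplexF m ⊆ Gmap m '' stdSimplexE (m+1) := by
    intro x hx
    exact ⟨Fmap m x, (Fmap_image m) ▸ Set.mem_image_of_mem _ hx, Gmap_Fmap m x⟩
  have h1 : volume (simplexF m) ≤ μH[(m:ℝ)] (Gmap m '' stdSimplexE (m+1)) := by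
    rw [← hausdorff_simplexF]
    exact measure_mono hsub
  have h2 := (Gmap_lip m).hausdorffMeasure_image_le (d := (m:ℝ))
    (by positivity) (stdSimplexE (m+1))
  have h3 : ((1:ℝ≥0) : ℝ≥0∞) ^ (m:ℝ) = 1 := by simp
  rw [h3, one_mul] at h2
  exact lt_of_lt_of_le (simplexF_vol_pos m) (le_trans h1 h2)

end VolAux6

namespace VolAux7
open Finset

lemma pow_sub_pow_le (a b : ℝ) (n : ℕ) (hb : 0 ≤ b) (hba : b ≤ a) :
    a^(n+1) - b^(n+1) ≤ (n+1) * (a-b) * a^n := by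
  have ha : 0 ≤ a := le_trans hb hba
  have h := geom_sum₂_mul a b (n+1)
  rw [← h]
  have hsum : (∑ i ∈ range (n+1), a ^ i * b ^ (n - i)) ≤ (n+1) * a^n := by
    calc (∑ i ∈ range (n+1), a ^ i * b ^ (n - i))
        ≤ ∑ i ∈ range (n+1), a^n := by
          apply Finset.sum_le_sum
          intro i hi
          have hin : i ≤ n := by
            have := Finset.mem_range.1 hi; omega
          calc a ^ i * b ^ (n - i) ≤ a ^ i * a ^ (n - i) := by
                apply mul_le_mul_of_nonneg_left (pow_le_pow_left₀ hb hba _) (pow_nonneg ha i)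
            _ = a ^ n := by rw [← pow_add, Nat.add_sub_cancel' hin]
      _ = (n+1) * a^n := by rw [Finset.sum_const]; simp [mul_comm]
  have hgs : (∑ i ∈ range (n + 1), a ^ i * b ^ (n + 1 - 1 - i)) =
      (∑ i ∈ range (n + 1), a ^ i * b ^ (n - i)) := by
    apply Finset.sum_congr rfl
    intro i _; congr 2
  rw [hgs]
  have hab : 0 ≤ a - b := by linarith
  calc (∑ i ∈ range (n+1), a ^ i * b ^ (n - i)) * (a - b)
      ≤ ((n+1) * a^n) * (a - b) := mul_le_mul_of_nonneg_right hsum hab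
    _ = (n+1) * (a-b) * a^n := by ring

lemma sum_bound (m J : ℕ) (δ : ℝ) (hδ : 0 < δ) (hJ : (J:ℝ)*δ ≤ 1) (hJ1 : 1 < ((J:ℝ)+1)*δ) :
    1 ≤ ((m:ℝ)+1)*δ * ∑ j ∈ Finset.range (J+1), (1 - (j:ℝ)*δ)^m := by
  have hnn : ∀ j : ℕ, j ≤ J → (0:ℝ) ≤ 1 - (j:ℝ)*δ := by
    intro j hj
    have : (j:ℝ)*δ ≤ (J:ℝ)*δ := by
      apply mul_le_mul_of_nonneg_right _ hδ.le
      exact_mod_cast hj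
    linarith
  have tele := Finset.sum_range_sub' (f := fun j => (1 - (j:ℝ)*δ)^(m+1)) J
  have hterm : ∀ j ∈ range J,
      (1 - (j:ℝ)*δ)^(m+1) - (1 - ((j:ℝ)+1)*δ)^(m+1) ≤ ((m:ℝ)+1)*δ*(1 - (j:ℝ)*δ)^m := by
    intro j hj
    have hjJ : j + 1 ≤ J := Finset.mem_range.1 hj
    have hb : (0:ℝ) ≤ 1 - ((j:ℝ)+1)*δ := by
      have := hnn (j+1) hjJ; push_cast at this ⊢; linarith
    have hba : 1 - ((j:ℝ)+1)*δ ≤ 1 - (j:ℝ)*δ := by nlinarith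
    have := pow_sub_pow_le (1 - (j:ℝ)*δ) (1 - ((j:ℝ)+1)*δ) m hb hba
    calc (1 - (j:ℝ)*δ)^(m+1) - (1 - ((j:ℝ)+1)*δ)^(m+1)
        ≤ ((m:ℝ)+1) * ((1 - (j:ℝ)*δ) - (1 - ((j:ℝ)+1)*δ)) * (1 - (j:ℝ)*δ)^m := by
          exact_mod_cast this
      _ = ((m:ℝ)+1)*δ*(1 - (j:ℝ)*δ)^m := by ring
  have hlast : (1 - (J:ℝ)*δ)^(m+1) ≤ ((m:ℝ)+1)*δ*(1 - (J:ℝ)*δ)^m := by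
    have h0 : (0:ℝ) ≤ 1 - (J:ℝ)*δ := by linarith
    have h1 : 1 - (J:ℝ)*δ < δ := by nlinarith
    have h2 : (0:ℝ) ≤ (1 - (J:ℝ)*δ)^m := pow_nonneg h0 m
    calc (1 - (J:ℝ)*δ)^(m+1) = (1 - (J:ℝ)*δ) * (1 - (J:ℝ)*δ)^m := by ring
      _ ≤ δ * (1 - (J:ℝ)*δ)^m := mul_le_mul_of_nonneg_right h1.le h2
      _ ≤ ((m:ℝ)+1)*δ*(1 - (J:ℝ)*δ)^m := by
          apply mul_le_mul_of_nonneg_right _ h2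
          nlinarith [Nat.cast_nonneg (α := ℝ) m]
  have hmain : 1 ≤ ∑ j ∈ Finset.range (J+1), ((m:ℝ)+1)*δ*(1 - (j:ℝ)*δ)^m := by
    rw [Finset.sum_range_succ]
    have hsum1 : (1 - ((0:ℕ):ℝ)*δ)^(m+1) - (1 - (J:ℝ)*δ)^(m+1)
        ≤ ∑ j ∈ range J, ((m:ℝ)+1)*δ*(1 - (j:ℝ)*δ)^m := by
      rw [← tele]
      apply Finset.sum_le_sum
      intro j hj
      have := hterm j hj
      push_cast at this ⊢
      linarith
    have h00 : (1 - ((0:ℕ):ℝ)*δ)^(m+1) = 1 := by norm_num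
    rw [h00] at hsum1
    linarith
  calc (1:ℝ) ≤ ∑ j ∈ Finset.range (J+1), ((m:ℝ)+1)*δ*(1 - (j:ℝ)*δ)^m := hmain
    _ = ((m:ℝ)+1)*δ * ∑ j ∈ Finset.range (J+1), (1 - (j:ℝ)*δ)^m := by
        rw [Finset.mul_sum]

end VolAux7

namespace VolAux8
open VolAux4 VolAux5

def vert (P : ℕ) (k : Fin P) : EuclideanSpace ℝ (Fin P) := WithLp.toLp 2 (fun l => if l = k then (1:ℝ) else 0)

lemma vert_mem (P : ℕ) (k : Fin P) : vert P k ∈ stdSimplexE P := by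
  constructor
  · intro l; by_cases h : l = k <;> simp [vert, h]
  · simp [vert]

lemma decomp (P : ℕ) (z : EuclideanSpace ℝ (Fin P)) :
    z = ∑ j, z j • vert P j := by
  ext l
  rw [show (∑ j, z j • vert P j) l = ∑ j, z j * vert P j l by
    rw [WithLp.ofLp_sum, Finset.sum_apply]; rfl]
  simp [vert, Finset.sum_ite_eq']

lemma semi_sum {E : Type*} [AddCommGroup E] [Module ℝ E] (NS : Seminorm ℝ E)
    {ι : Type*} (s : Finset ι) (f : ι → E) :
    NS (∑ j ∈ s, f j) ≤ ∑ j ∈ s, NS (f j) := by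
  classical
  induction s using Finset.induction_on with
  | empty => simp
  | insert a s' hx ih =>
    rw [Finset.sum_insert hx, Finset.sum_insert hx]
    exact le_trans (map_add_le_add NS _ _) (add_le_add_right ih _)

lemma seminorm_lip (P : ℕ) (NS : Seminorm ℝ (EuclideanSpace ℝ (Fin P))) :
    Continuous (fun z => NS z) := by
  set C : ℝ := ∑ j, NS (vert P j) with hC
  have hC0 : 0 ≤ C := Finset.sum_nonneg fun j _ => apply_nonneg NS _
  have hbound : ∀ z : EuclideanSpace ℝ (Fin P), NS z ≤ C * ‖z‖ := by
    intro z
    calc NS z = NS (∑ j, z j • vert P j) := by rw [← decomp]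
      _ ≤ ∑ j, NS (z j • vert P j) := semi_sum NS _ _
      _ = ∑ j, |z j| * NS (vert P j) := by
          apply Finset.sum_congr rfl
          intro j _
          rw [map_smul_eq_mul]; rfl
      _ ≤ ∑ j, ‖z‖ * NS (vert P j) := by
          apply Finset.sum_le_sum
          intro j _
          apply mul_le_mul_of_nonneg_right _ (apply_nonneg NS _)
          have := coord_dist_le P z 0 j
          simpa [Real.dist_eq] using this
      _ = C * ‖z‖ := by rw [← Finset.mul_sum, hC]; ring
  have hlip : LipschitzWith (Real.toNNReal C) (fun z => NS z) := by
    apply LipschitzWith.of_dist_le_mul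
    intro z z'
    rw [Real.dist_eq, Real.coe_toNNReal _ hC0, dist_eq_norm]
    have h1 : NS z - NS z' ≤ C * ‖z - z'‖ := by
      have := map_add_le_add NS (z - z') z'
      simp only [sub_add_cancel] at this
      linarith [hbound (z - z')]
    have h2 : NS z' - NS z ≤ C * ‖z - z'‖ := by
      have := map_add_le_add NS (z' - z) z
      simp only [sub_add_cancel] at this
      have h3 : NS (z' - z) ≤ C * ‖z - z'‖ := by
        rw [show ‖z - z'‖ = ‖z' - z‖ by rw [norm_sub_rev]]
        exact hbound (z' - z)
      linarith
    rw [abs_le]; constructor <;> linarith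
  exact hlip.continuous

end VolAux8

namespace VolAux9
open VolAux4 VolAux5 VolAux6 VolAux7 VolAux8
open scoped ENNReal

theorem anti_conc (P : ℕ) (hP : 0 < P) (NS : Seminorm ℝ (EuclideanSpace ℝ (Fin P)))
    (c : ℝ) (hc0 : 0 < c) (hc1 : c < 1) :
    ENNReal.ofReal (1 - 2 * P * c) ≤
      ((μH[(P:ℝ)-1] (stdSimplexE P))⁻¹ •
        (μH[(P:ℝ)-1]).restrict (stdSimplexE P))
        {z | c * sSup ((fun w => NS w) '' stdSimplexE P) ≤ NS z} := by
  obtain ⟨m, rfl⟩ : ∃ m, P = m + 1 := ⟨P - 1, by omega⟩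
  have hexp : ((m+1:ℕ):ℝ) - 1 = (m:ℝ) := by push_cast; ring
  rw [hexp]
  set μ : Measure (EuclideanSpace ℝ (Fin (m+1))) := μH[(m:ℝ)] with hμ
  set Δ : Set (EuclideanSpace ℝ (Fin (m+1))) := stdSimplexE (m+1) with hΔ
  set M : ℝ := sSup ((fun w => NS w) '' Δ) with hM
  set G : Set (EuclideanSpace ℝ (Fin (m+1))) := {z | c * M ≤ NS z} with hG
  set B : Set (EuclideanSpace ℝ (Fin (m+1))) := Δ \ G with hB
  have hΔc : IsClosed Δ := simplex_isClosed (m+1)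
  have hΔm : MeasurableSet Δ := hΔc.measurableSet
  have hNScont : Continuous (fun z => NS z) := seminorm_lip (m+1) NS
  have hGc : IsClosed G := by
    have : G = (fun z => NS z) ⁻¹' Set.Ici (c * M) := rfl
    rw [this]
    exact IsClosed.preimage hNScont isClosed_Ici
  have hGm : MeasurableSet G := hGc.measurableSet
  have hBm : MeasurableSet B := hΔm.diff hGm
  have hμΔpos : 0 < μ Δ := simplexE_meas_pos m
  have hμΔfin : μ Δ < ⊤ := simplexE_meas_fin m
  -- the sup is attained at a vertex
  have hne : (Finset.univ : Finset (Fin (m+1))).Nonempty := ⟨0, Finset.mem_univ 0⟩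
  obtain ⟨k0, _, hk0⟩ := Finset.exists_mem_eq_sup' hne (fun j => NS (vert (m+1) j))
  set M₀ : ℝ := Finset.univ.sup' hne (fun j => NS (vert (m+1) j)) with hM₀
  have hub : ∀ z ∈ Δ, NS z ≤ M₀ := by
    intro z hz
    calc NS z = NS (∑ j, z j • vert (m+1) j) := by rw [← decomp]
      _ ≤ ∑ j, NS (z j • vert (m+1) j) := semi_sum NS _ _
      _ = ∑ j, z j * NS (vert (m+1) j) := by
          apply Finset.sum_congr rfl
          intro j _
          rw [map_smul_eq_mul]
          rw [Real.norm_eq_abs, abs_of_nonneg (hz.1 j)]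
      _ ≤ ∑ j, z j * M₀ := by
          apply Finset.sum_le_sum
          intro j _
          exact mul_le_mul_of_nonneg_left
            (Finset.le_sup' (fun j => NS (vert (m+1) j)) (Finset.mem_univ j)) (hz.1 j)
      _ = M₀ := by rw [← Finset.sum_mul, hz.2, one_mul]
  have hMM : M = M₀ := by
    rw [hM]
    apply IsGreatest.csSup_eq
    constructor
    · exact ⟨vert (m+1) k0, vert_mem (m+1) k0, hk0.symm⟩
    · rintro x ⟨z, hz, rfl⟩
      exact hub z hz
  have hM0 : 0 ≤ M := by
    rw [hMM, hk0]
    exact apply_nonneg NS _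
  -- the key measure bound
  have key : μ B ≤ ENNReal.ofReal (2 * (m+1) * c) * μ Δ := by
    by_cases hBe : B = ∅
    · rw [hBe]; simp
    · obtain ⟨z₀, hz₀⟩ := Set.nonempty_iff_ne_empty.2 hBe
      have hcM : ∀ z ∈ B, NS z < c * M := by
        intro z hz
        by_contra hcon
        exact hz.2 (le_of_not_gt hcon)
      have hMpos : 0 < M := by
        rcases lt_or_eq_of_le hM0 with h | h
        · exact h
        · exfalso
          have := hcM z₀ hz₀
          rw [← h] at this
          simp only [mul_zero] at this
          exact absurd this (not_lt.2 (apply_nonneg NS _))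
      have hm1 : 1 ≤ m := by
        by_contra hm0
        have hm0' : m = 0 := by omega
        subst hm0'
        have hzek : z₀ = vert 1 k0 := by
          ext l
          have huniv : (Finset.univ : Finset (Fin (0+1))) = {l} := by
            ext x
            simp only [Finset.mem_univ, Finset.mem_singleton, true_iff]
            ext
            omega
          have h1 : z₀ l = 1 := by
            have h2 := hz₀.1.2
            rwa [huniv, Finset.sum_singleton] at h2
          have hlk : l = k0 := by ext; omega
          have h2 : vert 1 k0 l = 1 := by simp [vert, hlk]
          rw [h1, h2]
        have := hcM z₀ hz₀
        rw [hzek, ← hk0, ← hMM] at this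
        nlinarith
      set ek : EuclideanSpace ℝ (Fin (m+1)) := vert (m+1) k0 with hek
      have hekΔ : ek ∈ Δ := vert_mem (m+1) k0
      have hNSek : NS ek = M := by rw [hMM, hk0]
      set J : ℕ := Nat.floor (1/(2*c)) with hJ
      have hsle : ∀ j : ℕ, j ≤ J → 2*c*(j:ℝ) ≤ 1 := by
        intro j hj
        have h1 : (j:ℝ) ≤ 1/(2*c) := by
          calc (j:ℝ) ≤ (J:ℝ) := by exact_mod_cast hj
            _ ≤ 1/(2*c) := Nat.floor_le (by positivity)
        calc 2*c*(j:ℝ) ≤ 2*c*(1/(2*c)) := by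
              apply mul_le_mul_of_nonneg_left h1 (by positivity)
          _ = 1 := by field_simp
      have hJ1 : 1 < 2*c*((J:ℝ)+1) := by
        have := Nat.lt_floor_add_one (1/(2*c))
        calc (1:ℝ) = 2*c*(1/(2*c)) := by field_simp
          _ < 2*c*((J:ℝ)+1) := by
              apply mul_lt_mul_of_pos_left _ (by positivity)
              exact_mod_cast this
      set φ : ℕ → EuclideanSpace ℝ (Fin (m+1)) → EuclideanSpace ℝ (Fin (m+1)) :=
        fun j z => (1 - 2*c*(j:ℝ)) • z + (2*c*(j:ℝ)) • ek with hφ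
      -- seminorm values on images
      have hup : ∀ (j : ℕ), j ≤ J → ∀ z ∈ B,
          NS (φ j z) ≤ (1 - 2*c*(j:ℝ)) * NS z + 2*c*(j:ℝ) * M := by
        intro j hj z hz
        calc NS (φ j z) ≤ NS ((1 - 2*c*(j:ℝ)) • z) + NS ((2*c*(j:ℝ)) • ek) :=
              map_add_le_add NS _ _
          _ = (1 - 2*c*(j:ℝ)) * NS z + 2*c*(j:ℝ) * M := by
              rw [map_smul_eq_mul, map_smul_eq_mul, hNSek, Real.norm_eq_abs, Real.norm_eq_abs,
                abs_of_nonneg (by linarith [hsle j hj]), abs_of_nonneg (by positivity)]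
      have hlow : ∀ (j : ℕ), j ≤ J → ∀ z ∈ B,
          2*c*(j:ℝ) * M - (1 - 2*c*(j:ℝ)) * NS z ≤ NS (φ j z) := by
        intro j hj z hz
        have h1 : NS ((2*c*(j:ℝ)) • ek) ≤ NS (φ j z) + NS ((1 - 2*c*(j:ℝ)) • z) := by
          have heq : (2*c*(j:ℝ)) • ek = φ j z - (1 - 2*c*(j:ℝ)) • z := by
            show (2*c*(j:ℝ)) • ek =
              ((1 - 2*c*(j:ℝ)) • z + (2*c*(j:ℝ)) • ek) - (1 - 2*c*(j:ℝ)) • z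
            abel
          rw [heq]
          exact map_sub_le_add NS _ _
        rw [map_smul_eq_mul, map_smul_eq_mul, hNSek, Real.norm_eq_abs, Real.norm_eq_abs,
          abs_of_nonneg (show (0:ℝ) ≤ 2*c*(j:ℝ) by positivity),
          abs_of_nonneg (show (0:ℝ) ≤ 1 - 2*c*(j:ℝ) by linarith [hsle j hj])] at h1
        linarith
      -- images are inside the simplex
      have himgΔ : ∀ (j : ℕ), j ≤ J → φ j '' B ⊆ Δ := by
        intro j hj
        rintro x ⟨z, hz, rfl⟩
        have hzΔ : z ∈ Δ := hz.1
        have hs0 : 0 ≤ 2*c*(j:ℝ) := by positivity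
        have hs1 : 2*c*(j:ℝ) ≤ 1 := hsle j hj
        constructor
        · intro l
          have happ : φ j z l = (1 - 2*c*(j:ℝ)) * z l + (2*c*(j:ℝ)) * ek l := rfl
          rw [happ]
          have := hzΔ.1 l
          have := (hekΔ).1 l
          nlinarith
        · have happ : ∀ l, φ j z l = (1 - 2*c*(j:ℝ)) * z l + (2*c*(j:ℝ)) * ek l :=
            fun l => rfl
          rw [Finset.sum_congr rfl fun l _ => happ l, Finset.sum_add_distrib,
            ← Finset.mul_sum, ← Finset.mul_sum, hzΔ.2, hekΔ.2]
          ring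
      -- disjointness of the homothety images
      have hdis : ∀ j j' : ℕ, j < j' → j' ≤ J → Disjoint (φ j '' B) (φ j' '' B) := by
        intro j j' hjj hj'
        rw [Set.disjoint_left]
        rintro x ⟨z, hz, rfl⟩ ⟨z', hz', hx⟩
        have hjJ : j ≤ J := by omega
        have h1 := hup j hjJ z hz
        have h2 := hlow j' hj' z' hz'
        rw [hx] at h2
        have h3 := hcM z hz
        have h4 := hcM z' hz'
        have h5 : (0:ℝ) ≤ NS z := apply_nonneg _ _
        have h6 : (0:ℝ) ≤ NS z' := apply_nonneg _ _
        have hss : 2*c*(j:ℝ) + 2*c ≤ 2*c*(j':ℝ) := by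
          have hcast : (j:ℝ) + 1 ≤ (j':ℝ) := by exact_mod_cast hjj
          nlinarith
        have hs'1 : 2*c*(j':ℝ) ≤ 1 := hsle j' hj'
        have hs0 : (0:ℝ) ≤ 2*c*(j:ℝ) := by positivity
        have hsj1 : 2*c*(j:ℝ) < 1 := by nlinarith
        nlinarith [mul_pos hMpos hc0, mul_le_mul_of_nonneg_left h3.le
          (show (0:ℝ) ≤ 1 - 2*c*(j:ℝ) by linarith),
          mul_le_mul_of_nonneg_left h4.le (show (0:ℝ) ≤ 1 - 2*c*(j':ℝ) by linarith)]
      -- measurability and measure scaling of images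
      have hmeas_scale : ∀ j : ℕ, j ≤ J →
          MeasurableSet (φ j '' B) ∧
            ENNReal.ofReal ((1 - 2*c*(j:ℝ))^m) * μ B ≤ μ (φ j '' B) := by
        intro j hj
        by_cases hone : 2*c*(j:ℝ) = 1
        · have hconst : ∀ z, φ j z = ek := by
            intro z
            show (1 - 2*c*(j:ℝ)) • z + (2*c*(j:ℝ)) • ek = ek
            rw [hone]
            simp
          have him : φ j '' B = {ek} := by
            calc φ j '' B = (fun _ => ek) '' B :=
                  Set.image_congr fun z _ => hconst z
              _ = {ek} := Set.Nonempty.image_const ⟨z₀, hz₀⟩ ek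
          refine ⟨him ▸ measurableSet_singleton ek, ?_⟩
          have hz : (1 - 2*c*(j:ℝ))^m = 0 := by
            rw [hone]
            simp [zero_pow (show m ≠ 0 by omega)]
          rw [hz]
          simp
        · have hs1 : 2*c*(j:ℝ) < 1 := lt_of_le_of_ne (hsle j hj) hone
          set s : ℝ := 2*c*(j:ℝ) with hsdef
          have hs0 : 0 ≤ s := by positivity
          have h1s : 0 < 1 - s := by linarith
          set ψ : EuclideanSpace ℝ (Fin (m+1)) → EuclideanSpace ℝ (Fin (m+1)) :=
            fun x => (1-s)⁻¹ • (x - s • ek) with hψ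
          have hψφ : ∀ z, ψ (φ j z) = z := by
            intro z
            show (1-s)⁻¹ • (((1 - s) • z + s • ek) - s • ek) = z
            rw [add_sub_cancel_right, smul_smul, inv_mul_cancel₀ h1s.ne', one_smul]
          have hφψ : ∀ x, φ j (ψ x) = x := by
            intro x
            show (1 - s) • ((1-s)⁻¹ • (x - s • ek)) + s • ek = x
            rw [smul_smul, mul_inv_cancel₀ h1s.ne', one_smul, sub_add_cancel]
          have hpre : φ j '' B = ψ ⁻¹' B := by
            rw [Set.image_eq_preimage_of_inverse hψφ hφψ]
          have hψcont : Continuous ψ := by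
            show Continuous (fun x => (1-s)⁻¹ • (x - s • ek))
            fun_prop
          have hmeas : MeasurableSet (φ j '' B) := by
            rw [hpre]
            exact hψcont.measurable hBm
          refine ⟨hmeas, ?_⟩
          have hψlip : LipschitzWith (Real.toNNReal ((1-s)⁻¹)) ψ := by
            apply LipschitzWith.of_dist_le_mul
            intro x x'
            rw [dist_eq_norm, dist_eq_norm, Real.coe_toNNReal _ (by positivity)]
            have hdiff : ψ x - ψ x' = (1-s)⁻¹ • (x - x') := by
              show (1-s)⁻¹ • (x - s • ek) - (1-s)⁻¹ • (x' - s • ek) = _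
              rw [← smul_sub]
              congr 1
              abel
            rw [hdiff, norm_smul, Real.norm_eq_abs, abs_of_nonneg (by positivity)]
          have hle := hψlip.hausdorffMeasure_image_le (d := (m:ℝ)) (by positivity) (φ j '' B)
          have himgid : ψ '' (φ j '' B) = B := by
            rw [Set.image_image]
            rw [show (fun z => ψ (φ j z)) = id from funext hψφ, Set.image_id]
          rw [himgid] at hle
          have hK : ((Real.toNNReal ((1-s)⁻¹) : ℝ≥0) : ℝ≥0∞) = (ENNReal.ofReal (1-s))⁻¹ := by
            rw [← ENNReal.ofReal_inv_of_pos h1s]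
            rfl
          have hKp : ((Real.toNNReal ((1-s)⁻¹) : ℝ≥0) : ℝ≥0∞) ^ ((m:ℕ):ℝ)
              = ((ENNReal.ofReal (1-s))⁻¹)^m := by
            rw [hK, ENNReal.rpow_natCast]
          rw [hKp] at hle
          have ha0 : ENNReal.ofReal (1-s) ≠ 0 := (ENNReal.ofReal_pos.2 h1s).ne'
          have hat : ENNReal.ofReal (1-s) ≠ ⊤ := ENNReal.ofReal_ne_top
          calc ENNReal.ofReal ((1-s)^m) * μ B
              = (ENNReal.ofReal (1-s))^m * μ B := by rw [ENNReal.ofReal_pow h1s.le]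
            _ ≤ (ENNReal.ofReal (1-s))^m * (((ENNReal.ofReal (1-s))⁻¹)^m * μ (φ j '' B)) :=
                mul_le_mul_right hle _
            _ = ((ENNReal.ofReal (1-s)) * (ENNReal.ofReal (1-s))⁻¹)^m * μ (φ j '' B) := by
                rw [mul_pow, mul_assoc]
            _ = μ (φ j '' B) := by
                rw [ENNReal.mul_inv_cancel ha0 hat, one_pow, one_mul]
      -- summing up the disjoint images
      have hPD : Set.PairwiseDisjoint ↑(Finset.range (J+1)) (fun j : ℕ => φ j '' B) := by
        intro a ha b hb hab
        simp only [Finset.coe_range, Set.mem_Iio] at ha hb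
        rcases lt_or_gt_of_ne hab with h | h
        · exact hdis a b h (by omega)
        · exact (hdis b a h (by omega)).symm
      have hunion := measure_biUnion_finset (μ := μ) hPD
        (fun j hj => (hmeas_scale j (by
          have := Finset.mem_range.1 hj; omega)).1)
      have hsum : ∑ j ∈ Finset.range (J+1), μ (φ j '' B) ≤ μ Δ := by
        rw [← hunion]
        apply measure_mono
        apply Set.iUnion₂_subset
        intro j hj
        exact himgΔ j (by have := Finset.mem_range.1 hj; omega)
      set S : ℝ := ∑ j ∈ Finset.range (J+1), (1 - 2*c*(j:ℝ))^m with hS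
      have hofrS : ENNReal.ofReal S * μ B ≤ μ Δ := by
        rw [hS, ENNReal.ofReal_sum_of_nonneg (fun j hj => by
          have hjJ : j ≤ J := by have := Finset.mem_range.1 hj; omega
          exact pow_nonneg (by linarith [hsle j hjJ]) m), Finset.sum_mul]
        calc ∑ j ∈ Finset.range (J+1), ENNReal.ofReal ((1 - 2*c*(j:ℝ))^m) * μ B
            ≤ ∑ j ∈ Finset.range (J+1), μ (φ j '' B) := by
              apply Finset.sum_le_sum
              intro j hj
              exact (hmeas_scale j (by have := Finset.mem_range.1 hj; omega)).2
          _ ≤ μ Δ := hsum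
      have hSlb : 1/(2*c*((m:ℝ)+1)) ≤ S := by
        have hsb := sum_bound m J (2*c) (by positivity)
          (by have := hsle J le_rfl; linarith [hsle J le_rfl])
          (by nlinarith [hJ1])
        have hSeq : S = ∑ j ∈ Finset.range (J+1), (1 - (j:ℝ)*(2*c))^m := by
          apply Finset.sum_congr rfl
          intro j _
          ring_nf
        rw [hSeq]
        rw [div_le_iff₀ (by positivity)]
        nlinarith [hsb]
      have hx2 : ENNReal.ofReal (1/(2*c*((m:ℝ)+1))) * μ B ≤ μ Δ :=
        le_trans (mul_le_mul_left (ENNReal.ofReal_le_ofReal hSlb) _) hofrS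
      have ht0 : (0:ℝ) < 1/(2*c*((m:ℝ)+1)) := by positivity
      have hne0 : ENNReal.ofReal (1/(2*c*((m:ℝ)+1))) ≠ 0 := (ENNReal.ofReal_pos.2 ht0).ne'
      have hnetop : ENNReal.ofReal (1/(2*c*((m:ℝ)+1))) ≠ ⊤ := ENNReal.ofReal_ne_top
      calc μ B = (ENNReal.ofReal (1/(2*c*((m:ℝ)+1))))⁻¹ *
              (ENNReal.ofReal (1/(2*c*((m:ℝ)+1))) * μ B) := by
            rw [← mul_assoc, ENNReal.inv_mul_cancel hne0 hnetop, one_mul]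
        _ ≤ (ENNReal.ofReal (1/(2*c*((m:ℝ)+1))))⁻¹ * μ Δ := mul_le_mul_right hx2 _
        _ = ENNReal.ofReal (2 * (m+1) * c) * μ Δ := by
            rw [← ENNReal.ofReal_inv_of_pos ht0]
            congr 1
            rw [one_div, inv_inv]
            push_cast
            ring

  -- conclusion
  have hGΔ : μ Δ - μ B ≤ μ (G ∩ Δ) := by
    have hsub : Δ \ B ⊆ G ∩ Δ := by
      intro z hz
      rcases hz with ⟨hzΔ, hzB⟩
      refine ⟨?_, hzΔ⟩
      by_contra hzG
      exact hzB ⟨hzΔ, hzG⟩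
    calc μ Δ - μ B ≤ μ (Δ \ B) := le_measure_diff
      _ ≤ μ (G ∩ Δ) := measure_mono hsub
  rw [Measure.smul_apply, Measure.restrict_apply hGm, smul_eq_mul]
  have hofr : ENNReal.ofReal (1 - 2 * ((m:ℝ)+1) * c) = 1 - ENNReal.ofReal (2 * ((m:ℝ)+1) * c) := by
    rw [show (1:ℝ≥0∞) = ENNReal.ofReal 1 by simp, ← ENNReal.ofReal_sub _ (by positivity)]
  have hcast : ((m+1:ℕ):ℝ) = (m:ℝ)+1 := by push_cast; ring
  calc ENNReal.ofReal (1 - 2 * ((m+1:ℕ):ℝ) * c)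
      = 1 - ENNReal.ofReal (2 * ((m:ℝ)+1) * c) := by rw [hcast, hofr]
    _ = (1 - ENNReal.ofReal (2 * ((m:ℝ)+1) * c)) * ((μ Δ)⁻¹ * μ Δ) := by
        rw [ENNReal.inv_mul_cancel hμΔpos.ne' hμΔfin.ne, mul_one]
    _ = (μ Δ)⁻¹ * ((1 - ENNReal.ofReal (2 * ((m:ℝ)+1) * c)) * μ Δ) := by ring
    _ = (μ Δ)⁻¹ * (μ Δ - ENNReal.ofReal (2 * ((m:ℝ)+1) * c) * μ Δ) := by
        rw [ENNReal.sub_mul (fun _ _ => hμΔfin.ne), one_mul]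
    _ ≤ (μ Δ)⁻¹ * (μ Δ - μ B) := by
        apply mul_le_mul_right
        apply tsub_le_tsub_left
        rw [show (2 : ℝ) * ((m:ℝ)+1) * c = 2 * (↑m+1) * c by ring]
        calc μ B ≤ ENNReal.ofReal (2 * (m+1) * c) * μ Δ := key
          _ = ENNReal.ofReal (2 * ((m:ℝ)+1) * c) * μ Δ := by norm_num
    _ ≤ (μ Δ)⁻¹ * μ (G ∩ Δ) := mul_le_mul_right hGΔ _

end VolAux9
namespace VolGlue
open VolAux VolAux2 VolAux3

def Tlin {d P : ℕ} (vv : Fin P → Fin d → ℝ) :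
    EuclideanSpace ℝ (Fin P) →ₗ[ℝ] (Fin d → ℝ) where
  toFun z := fun a => ∑ j, z j * vv j a
  map_add' z z' := by
    funext a
    show ∑ j, (z j + z' j) * vv j a = _
    simp [add_mul, Finset.sum_add_distrib]
  map_smul' s z := by
    funext a
    show ∑ j, (s * z j) * vv j a = _
    simp [Finset.mul_sum, mul_assoc]

end VolGlue
/-- **2-anti-concentration of the volume function** (Lemma 4.2): for each block coordinate `i`,
any fixed values of the other blocks in their simplices, and any `c ∈ (0,1)`, the uniform
measure of `{z ∈ Δ_{p_i} : f_V(…,z,…) ≥ c · sup_{Δ_{p_i}} f_V(…,w,…)}` is at least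
`1 - 2 p_i c`. -/
theorem volume_function_anti_concentrated
    (d r : ℕ) (hr : 1 ≤ r) (hdr : r ≤ d)
    (p : Fin r → ℕ) (hp : ∀ i, 0 < p i)
    (v : ∀ i : Fin r, Fin (p i) → (Fin d → ℝ))
    (i : Fin r) (y : ∀ j : Fin r, EuclideanSpace ℝ (Fin (p j)))
    (hy : ∀ j, j ≠ i → y j ∈ stdSimplexE (p j))
    (c : ℝ) (hc : c ∈ Set.Ioo (0 : ℝ) 1) :
    ENNReal.ofReal (1 - 2 * p i * c) ≤
      simplexUniform (p i)
        {z | c * sSup ((fun w => volFn p v (Function.update y i w)) '' stdSimplexE (p i)) ≤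
          volFn p v (Function.update y i z)} := by
  classical
  set P := p i with hP
  set w : Fin r → Fin d → ℝ := fun k a => ∑ j, (y k) j * v k j a with hw
  set NS : Seminorm ℝ (EuclideanSpace ℝ (Fin (p i))) :=
    (VolAux3.qSemi i w).comp (VolGlue.Tlin (v i)) with hNS
  have hvol : ∀ z, volFn p v (Function.update y i z) = NS z := by
    intro z
    have hmat : (Matrix.of fun (a : Fin d) (k : Fin r) =>
        ∑ j, (Function.update y i z) k j * v k j a) =
        VolAux.Wcol i w (VolGlue.Tlin (v i) z) := by
      ext a k
      by_cases hk : k = i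
      · subst hk
        simp only [VolAux.Wcol, Matrix.of_apply, if_pos rfl, Function.update_self]
        rfl
      · simp only [VolAux.Wcol, Matrix.of_apply, if_neg hk, Function.update_of_ne hk, hw]
    show Real.sqrt _ = NS z
    rw [hNS, Seminorm.comp_apply]
    show Real.sqrt _ = VolAux3.qfun i w (VolGlue.Tlin (v i) z)
    rw [VolAux3.qfun, VolAux.Bform, hmat]
  have hset : {z | c * sSup ((fun w => volFn p v (Function.update y i w)) ''
      stdSimplexE (p i)) ≤ volFn p v (Function.update y i z)} =
      {z | c * sSup ((fun w => NS w) '' stdSimplexE (p i)) ≤ NS z} := by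
    ext z
    rw [Set.mem_setOf_eq, Set.mem_setOf_eq, hvol z,
      show (fun w => volFn p v (Function.update y i w)) = (fun w => NS w) from funext hvol]
  rw [hset, simplexUniform]
  exact VolAux9.anti_conc (p i) (hp i) NS c hc.1 hc.2

end
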